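/- arXiv:1101.5471 — 2 statements merged into one kernel-verified Lean document; each statement's English description precedes it below -/
import Mathlib

section
/- Let ν ≥ 1, let A be a symmetric ν×ν matrix over ℚ, and let n₁,…,n_ν ∈ ℚ satisfy Σ_j A_{ij}·n_j = 0 for every index i. Then for every ℓ ∈ ℚ^ν, the vector x defined by x_i = ℓ_i·n_i satisfies Σ_{i,j} x_i·A_{ij}·x_j = −Σ_{1≤i<j≤ν} (ℓ_i − ℓ_j)²·n_i·n_j·A_{ij}. -/
/-- For a symmetric ν×ν rational matrix `A` whose rows pair to zero
against the vector `n` (i.e. `∑ j, A i j * n j = 0` for all `i`), the quadratic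
form evaluated at the vector `x i = ℓ i * n i` equals
`-∑_{i<j} (ℓ i - ℓ j)^2 * n i * n j * A i j`. -/
theorem linking_form_identity (ν : ℕ) (hν : 1 ≤ ν)
    (A : Matrix (Fin ν) (Fin ν) ℚ) (hsym : A.IsSymm)
    (n : Fin ν → ℚ) (hn : ∀ i, ∑ j, A i j * n j = 0)
    (ℓ : Fin ν → ℚ) :
    ∑ i, ∑ j, (ℓ i * n i) * A i j * (ℓ j * n j)
      = -∑ i, ∑ j ∈ Finset.univ.filter (fun j => i < j),
          (ℓ i - ℓ j) ^ 2 * n i * n j * A i j := by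
  classical
  set f : Fin ν → Fin ν → ℚ := fun i j => (ℓ i - ℓ j) ^ 2 * n i * n j * A i j with hf
  have hA : ∀ i j, A j i = A i j := fun i j => hsym.apply i j
  have hfsymm : ∀ i j, f j i = f i j := by
    intro i j; simp only [hf]; rw [hA i j]; ring
  -- swap lemma
  have key : ∀ g : Fin ν → Fin ν → ℚ,
      (∑ i, ∑ j ∈ Finset.univ.filter (fun j => j < i), g i j)
        = ∑ i, ∑ j ∈ Finset.univ.filter (fun j => i < j), g j i := by
    intro g
    simp only [Finset.sum_filter]
    rw [Finset.sum_comm]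
  -- total sum
  have hsplit : ∀ i, (∑ j, f i j)
      = (∑ j ∈ Finset.univ.filter (fun j => i < j), f i j)
        + (∑ j ∈ Finset.univ.filter (fun j => j < i), f i j) + f i i := by
    intro i
    have h1 := Finset.sum_filter_add_sum_filter_not Finset.univ (fun j => i < j) (f i)
    have h2 : Finset.univ.filter (fun j => ¬ i < j)
        = insert i (Finset.univ.filter (fun j => j < i)) := by
      ext j
      simp [not_lt, le_iff_lt_or_eq, or_comm, eq_comm]
    rw [h2, Finset.sum_insert (by simp)] at h1
    rw [← h1]; ring
  have hdiag : ∀ i, f i i = 0 := by intro i; simp [hf]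
  have htot : (∑ i, ∑ j, f i j)
      = 2 * ∑ i, ∑ j ∈ Finset.univ.filter (fun j => i < j), f i j := by
    calc (∑ i, ∑ j, f i j)
        = ∑ i, ((∑ j ∈ Finset.univ.filter (fun j => i < j), f i j)
            + (∑ j ∈ Finset.univ.filter (fun j => j < i), f i j) + f i i) := by
          exact Finset.sum_congr rfl fun i _ => hsplit i
      _ = (∑ i, ∑ j ∈ Finset.univ.filter (fun j => i < j), f i j)
            + (∑ i, ∑ j ∈ Finset.univ.filter (fun j => j < i), f i j)
            + ∑ i, f i i := by rw [Finset.sum_add_distrib, Finset.sum_add_distrib]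
      _ = 2 * ∑ i, ∑ j ∈ Finset.univ.filter (fun j => i < j), f i j := by
          rw [key f]
          simp only [hdiag, Finset.sum_const_zero, add_zero]
          rw [Finset.sum_congr rfl fun i _ => Finset.sum_congr rfl fun j _ => hfsymm i j]
          ring
  -- expand the total sum
  have z1 : (∑ i, ∑ j, ℓ i ^ 2 * n i * (A i j * n j)) = 0 := by
    refine Finset.sum_eq_zero fun i _ => ?_
    rw [← Finset.mul_sum, hn i, mul_zero]
  have z2 : (∑ i, ∑ j, ℓ j ^ 2 * n j * (A i j * n i)) = 0 := by
    rw [Finset.sum_comm]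
    refine Finset.sum_eq_zero fun j _ => ?_
    have : (∑ i, ℓ j ^ 2 * n j * (A i j * n i)) = ℓ j ^ 2 * n j * ∑ i, A j i * n i := by
      rw [Finset.mul_sum]
      exact Finset.sum_congr rfl fun i _ => by rw [hA i j]
    rw [this, hn j, mul_zero]
  have hexp : (∑ i, ∑ j, f i j)
      = -2 * ∑ i, ∑ j, (ℓ i * n i) * A i j * (ℓ j * n j) := by
    calc (∑ i, ∑ j, f i j)
        = ∑ i, ∑ j, (ℓ i ^ 2 * n i * (A i j * n j) + ℓ j ^ 2 * n j * (A i j * n i)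
            - 2 * ((ℓ i * n i) * A i j * (ℓ j * n j))) := by
          refine Finset.sum_congr rfl fun i _ => Finset.sum_congr rfl fun j _ => ?_
          simp only [hf]; ring
      _ = (∑ i, ∑ j, ℓ i ^ 2 * n i * (A i j * n j))
            + (∑ i, ∑ j, ℓ j ^ 2 * n j * (A i j * n i))
            - 2 * ∑ i, ∑ j, (ℓ i * n i) * A i j * (ℓ j * n j) := by
          simp only [Finset.sum_add_distrib, Finset.sum_sub_distrib, Finset.mul_sum]
      _ = -2 * ∑ i, ∑ j, (ℓ i * n i) * A i j * (ℓ j * n j) := by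
          rw [z1, z2]; ring
  have := htot.symm.trans hexp
  linarith [this]
end

section
/- Let ν ≥ 1 and let A be a symmetric ν×ν matrix over ℚ. Suppose there are rational numbers n₁,…,n_ν with n_i > 0 for all i such that Σ_j A_{ij}·n_j = 0 for every i, and suppose A_{ij} > 0 for all i ≠ j. Then A is negative semidefinite (xᵀAx ≤ 0 for every x ∈ ℚ^ν), and the null-space {x ∈ ℚ^ν : Ax = 0} is one-dimensional, spanned by the vector n = (n₁,…,n_ν). -/
/-- A symmetric rational matrix with positive off-diagonal entries
whose rows pair to zero against a positive vector `n` is negative semidefinite,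
and its null-space is one-dimensional, spanned by `n`. -/
theorem linking_matrix_negative_semidefinite (ν : ℕ) (hν : 1 ≤ ν)
    (A : Matrix (Fin ν) (Fin ν) ℚ) (hsym : A.IsSymm)
    (n : Fin ν → ℚ) (hpos : ∀ i, 0 < n i)
    (hn : ∀ i, ∑ j, A i j * n j = 0)
    (hoff : ∀ i j, i ≠ j → 0 < A i j) :
    (∀ x : Fin ν → ℚ, ∑ i, ∑ j, x i * A i j * x j ≤ 0) ∧
    (∀ x : Fin ν → ℚ, A.mulVec x = 0 ↔ ∃ c : ℚ, x = c • n) := by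
  classical
  have hsymm : ∀ i j, A j i = A i j := fun i j => hsym.apply i j
  have hne : ∀ i, n i ≠ 0 := fun i => (hpos i).ne'
  have hn' : ∀ j, ∑ i, A i j * n i = 0 := by
    intro j
    rw [← hn j]
    exact Finset.sum_congr rfl fun i _ => by rw [hsymm j i]
  -- key identity
  have key : ∀ x : Fin ν → ℚ,
      ∑ i, ∑ j, A i j * n i * n j * (x i / n i - x j / n j) ^ 2
        = -2 * ∑ i, ∑ j, x i * A i j * x j := by
    intro x
    set y : Fin ν → ℚ := fun i => x i / n i with hy
    have hxy : ∀ i, n i * y i = x i := fun i => by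
      simp [hy]; rw [mul_comm, div_mul_cancel₀ _ (hne i)]
    have expand : ∀ i j, A i j * n i * n j * (y i - y j) ^ 2
        = (n i * y i ^ 2) * (A i j * n j) - 2 * (x i * A i j * x j)
          + (n j * y j ^ 2) * (A i j * n i) := by
      intro i j
      rw [← hxy i, ← hxy j]
      ring
    have e1 : ∑ i, ∑ j, (n i * y i ^ 2) * (A i j * n j) = 0 := by
      simp only [← Finset.mul_sum]
      simp [hn]
    have e3 : ∑ i, ∑ j, (n j * y j ^ 2) * (A i j * n i) = 0 := by
      rw [Finset.sum_comm]
      simp only [← Finset.mul_sum]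
      simp [hn']
    calc ∑ i, ∑ j, A i j * n i * n j * (y i - y j) ^ 2
        = ∑ i, ∑ j, ((n i * y i ^ 2) * (A i j * n j) - 2 * (x i * A i j * x j)
            + (n j * y j ^ 2) * (A i j * n i)) :=
          Finset.sum_congr rfl fun i _ => Finset.sum_congr rfl fun j _ => expand i j
      _ = (∑ i, ∑ j, (n i * y i ^ 2) * (A i j * n j))
            - 2 * (∑ i, ∑ j, x i * A i j * x j)
            + (∑ i, ∑ j, (n j * y j ^ 2) * (A i j * n i)) := by
          simp only [Finset.sum_add_distrib, Finset.sum_sub_distrib, ← Finset.mul_sum]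
      _ = -2 * ∑ i, ∑ j, x i * A i j * x j := by
          rw [e1, e3]; ring
  -- nonnegativity of each term of the identity's LHS
  have hterm : ∀ (x : Fin ν → ℚ) (i j : Fin ν),
      0 ≤ A i j * n i * n j * (x i / n i - x j / n j) ^ 2 := by
    intro x i j
    by_cases h : i = j
    · subst h; simp
    · have := hoff i j h
      have := hpos i
      have := hpos j
      positivity
  have hSnonneg : ∀ x : Fin ν → ℚ,
      0 ≤ ∑ i, ∑ j, A i j * n i * n j * (x i / n i - x j / n j) ^ 2 := fun x =>
    Finset.sum_nonneg fun i _ => Finset.sum_nonneg fun j _ => hterm x i j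
  have hQle : ∀ x : Fin ν → ℚ, ∑ i, ∑ j, x i * A i j * x j ≤ 0 := by
    intro x
    have h1 := key x
    have h2 := hSnonneg x
    linarith
  refine ⟨hQle, ?_⟩
  intro x
  constructor
  · intro hAx
    -- Q = 0
    have hQ0 : ∑ i, ∑ j, x i * A i j * x j = 0 := by
      have : ∀ i, ∑ j, A i j * x j = 0 := by
        intro i
        have := congrFun hAx i
        simpa [Matrix.mulVec, dotProduct] using this
      calc ∑ i, ∑ j, x i * A i j * x j
          = ∑ i, x i * ∑ j, A i j * x j := by
            simp only [Finset.mul_sum]; exact Finset.sum_congr rfl fun i _ =>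
              Finset.sum_congr rfl fun j _ => by ring
        _ = 0 := by simp [this]
    have hS0 : ∑ i, ∑ j, A i j * n i * n j * (x i / n i - x j / n j) ^ 2 = 0 := by
      rw [key x, hQ0]; ring
    -- each term is zero
    have hall : ∀ i j, A i j * n i * n j * (x i / n i - x j / n j) ^ 2 = 0 := by
      intro i j
      have h1 := (Finset.sum_eq_zero_iff_of_nonneg
        (fun i _ => Finset.sum_nonneg fun j _ => hterm x i j)).mp hS0 i (Finset.mem_univ i)
      exact (Finset.sum_eq_zero_iff_of_nonneg
        (fun j _ => hterm x i j)).mp h1 j (Finset.mem_univ j)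
    have hyy : ∀ i j, i ≠ j → x i / n i = x j / n j := by
      intro i j hij
      have h0 := hall i j
      have hA := hoff i j hij
      have hni := hpos i
      have hnj := hpos j
      have hcoef : 0 < A i j * n i * n j := by positivity
      have : (x i / n i - x j / n j) ^ 2 = 0 := by
        rcases mul_eq_zero.mp h0 with h | h
        · exact absurd h hcoef.ne'
        · exact h
      have := pow_eq_zero_iff (n := 2) (by norm_num) |>.mp this
      linarith
    set i0 : Fin ν := ⟨0, hν⟩
    refine ⟨x i0 / n i0, funext fun i => ?_⟩
    by_cases h : i = i0
    · subst h
      simp [Pi.smul_apply, smul_eq_mul]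
      rw [div_mul_cancel₀ _ (hne i0)]
    · have := hyy i i0 h
      simp [Pi.smul_apply, smul_eq_mul, ← this]
      rw [div_mul_cancel₀ _ (hne i)]
  · rintro ⟨c, rfl⟩
    have hAn : A.mulVec n = 0 := by
      funext i
      simp [Matrix.mulVec, dotProduct, hn i]
    rw [Matrix.mulVec_smul, hAn, smul_zero]
end
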